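/- Let a > b > 0, c = √(a² − b²), δ₁ = √(4a² − b²), O = (0, −c·δ₁/b) and R = 2a²/b. If A, B, C ∈ ℝ² are noncollinear, each lies at distance R from O, and each of the three sidelines AB, BC, CA is tangent to E(a, b), then the centroid G = (A + B + C)/3 satisfies |G − (0, −√(4a⁴ − 5a²b² + b⁴)/(3b))| = 2(a² − b²)/(3b). In particular, over the Brocard-porism family the locus of the centroid X₂ is contained in the circle with that center and radius. -/

import Mathlib

open Real

/-- A point of the Euclidean plane `ℝ²`. -/
noncomputable def pt (x y : ℝ) : EuclideanSpace ℝ (Fin 2) := WithLp.toLp 2 ![x, y]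

/-- The ellipse with semi-axes `p, q` centered at the origin. -/
def ellipse (p q : ℝ) : Set (EuclideanSpace ℝ (Fin 2)) :=
  {z | z 0 ^ 2 / p ^ 2 + z 1 ^ 2 / q ^ 2 = 1}

/-- The line through two points, as a subset of the plane. -/
noncomputable def lineThrough (A B : EuclideanSpace ℝ (Fin 2)) :
    Set (EuclideanSpace ℝ (Fin 2)) :=
  (affineSpan ℝ {A, B} : AffineSubspace ℝ (EuclideanSpace ℝ (Fin 2)))

/-- A line is tangent to a conic if they intersect in exactly one point. -/
def IsTangent (L E : Set (EuclideanSpace ℝ (Fin 2))) : Prop := ∃ p, L ∩ E = {p}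

lemma mem_lineThrough_iff {A B p : EuclideanSpace ℝ (Fin 2)} :
    p ∈ lineThrough A B ↔ ∃ t : ℝ, p = t • (B - A) + A := by
  unfold lineThrough
  constructor
  · intro hp
    have h2 : (p - A) +ᵥ A ∈ affineSpan ℝ ({A, B} : Set (EuclideanSpace ℝ (Fin 2))) := by
      simpa [vadd_eq_add, sub_add_cancel] using hp
    rw [vadd_left_mem_affineSpan_pair] at h2
    obtain ⟨r, hr⟩ := h2
    refine ⟨r, ?_⟩
    have : r • (B - A) = p - A := by simpa [vsub_eq_sub] using hr
    rw [this]; abel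
  · rintro ⟨t, rfl⟩
    have := AffineMap.lineMap_mem_affineSpan_pair (k := ℝ) t A B
    simpa [AffineMap.lineMap_apply_module', vsub_eq_sub, vadd_eq_add] using this

lemma quad_disc {Q L C t0 : ℝ} (hQ : Q ≠ 0) (h0 : Q*t0^2 + L*t0 + C = 0)
    (heq : (-t0 - L/Q) = t0) : L^2 - 4*Q*C = 0 := by
  have hL : L = -2*Q*t0 := by
    field_simp at heq
    linarith
  rw [hL] at h0 ⊢
  linear_combination (-4*Q)*h0

lemma tangent_poly {a b : ℝ} (ha : a ≠ 0) (hb : b ≠ 0) {A B : EuclideanSpace ℝ (Fin 2)}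
    (hne : A ≠ B) (ht : IsTangent (lineThrough A B) (ellipse a b)) :
    b^2*(B 0 - A 0)^2 + a^2*(B 1 - A 1)^2 = (A 0 * B 1 - A 1 * B 0)^2 := by
  obtain ⟨p, hp⟩ := ht
  have ha2 : a^2 ≠ 0 := pow_ne_zero 2 ha
  have hb2 : b^2 ≠ 0 := pow_ne_zero 2 hb
  -- coordinate difference nonzero
  have hD : B 0 - A 0 ≠ 0 ∨ B 1 - A 1 ≠ 0 := by
    by_contra h
    push_neg at h
    obtain ⟨h0, h1⟩ := h
    apply hne
    ext i
    fin_cases i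
    · have := sub_eq_zero.mp h0; simpa using this.symm
    · have := sub_eq_zero.mp h1; simpa using this.symm
  set Dx := B 0 - A 0 with hDx
  set Dy := B 1 - A 1 with hDy
  set Q := b^2*Dx^2 + a^2*Dy^2 with hQdef
  set L0 := 2*(b^2*(A 0)*Dx + a^2*(A 1)*Dy) with hL0def
  set C0 := b^2*(A 0)^2 + a^2*(A 1)^2 - a^2*b^2 with hC0def
  have hQpos : 0 < Q := by
    rcases hD with h | h
    · have h1 : 0 < b^2*Dx^2 := by positivity
      nlinarith [sq_nonneg (a*Dy)]
    · have h1 : 0 < a^2*Dy^2 := by positivity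
      nlinarith [sq_nonneg (b*Dx)]
  have hQne : Q ≠ 0 := ne_of_gt hQpos
  -- membership in ellipse of line points
  have hmemE : ∀ t : ℝ, (t • (B - A) + A) ∈ ellipse a b ↔ Q*t^2 + L0*t + C0 = 0 := by
    intro t
    have hx : (t • (B - A) + A) 0 = A 0 + t*Dx := by
      simp [PiLp.add_apply, PiLp.smul_apply, PiLp.sub_apply, hDx]; ring
    have hy : (t • (B - A) + A) 1 = A 1 + t*Dy := by
      simp [PiLp.add_apply, PiLp.smul_apply, PiLp.sub_apply, hDy]; ring
    rw [ellipse, Set.mem_setOf_eq, hx, hy, div_add_div _ _ ha2 hb2,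
      div_eq_one_iff_eq (mul_ne_zero ha2 hb2)]
    constructor <;> intro h <;> [skip; skip] <;>
      · rw [hQdef, hL0def, hC0def] at *
        linear_combination h
  -- the tangency point
  have hpmem : p ∈ lineThrough A B ∩ ellipse a b := by rw [hp]; rfl
  obtain ⟨t0, hpt0⟩ := mem_lineThrough_iff.mp hpmem.1
  have ht0 : Q*t0^2 + L0*t0 + C0 = 0 := (hmemE t0).mp (hpt0 ▸ hpmem.2)
  set t1 : ℝ := -t0 - L0/Q with ht1def
  have ht1 : Q*t1^2 + L0*t1 + C0 = 0 := by
    have h : Q*t1^2 + L0*t1 + C0 = Q*t0^2 + L0*t0 + C0 := by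
      rw [ht1def]; field_simp; ring
    rw [h]; exact ht0
  have hm1 : (t1 • (B - A) + A) ∈ lineThrough A B ∩ ellipse a b :=
    ⟨mem_lineThrough_iff.mpr ⟨t1, rfl⟩, (hmemE t1).mpr ht1⟩
  have heqp : t1 • (B - A) + A = t0 • (B - A) + A := by
    rw [hp] at hm1
    rw [Set.mem_singleton_iff] at hm1
    rw [hm1, hpt0]
  have hBA : B - A ≠ 0 := sub_ne_zero_of_ne (Ne.symm hne)
  have hteq : t1 = t0 := by
    have h1 : (t1 - t0) • (B - A) = (0 : EuclideanSpace ℝ (Fin 2)) := by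
      rw [sub_smul, sub_eq_zero]
      exact add_right_cancel heqp
    rcases smul_eq_zero.mp h1 with h | h
    · linarith [sub_eq_zero.mp h]
    · exact absurd h hBA
  have key : L0^2 - 4*Q*C0 = 0 := quad_disc hQne ht0 (ht1def ▸ hteq)
  rw [hQdef, hL0def, hC0def, hDx, hDy] at key
  have h4 : 4*a^2*b^2 * (b^2*(B 0 - A 0)^2 + a^2*(B 1 - A 1)^2 - (A 0 * B 1 - A 1 * B 0)^2) = 0 := by
    linear_combination key
  rcases mul_eq_zero.mp h4 with h | h
  · exact absurd h (by positivity : (0:ℝ) < 4*a^2*b^2).ne'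
  · rw [hQdef, hDx, hDy]
    linarith [h]

set_option maxHeartbeats 4000000 in
/-- Over the Brocard porism, the centroid `X₂ = (A + B + C)/3` lies on the circle of
center `(0, −√(4a⁴ − 5a²b² + b⁴)/(3b))` and radius `2(a² − b²)/(3b)`. -/
theorem brocard_porism_centroid_locus (a b c δ₁ R : ℝ) (hab : a > b) (hb : 0 < b)
    (hc : c = Real.sqrt (a ^ 2 - b ^ 2)) (hδ : δ₁ = Real.sqrt (4 * a ^ 2 - b ^ 2))
    (hR : R = 2 * a ^ 2 / b)
    (O : EuclideanSpace ℝ (Fin 2)) (hO : O = pt 0 (-(c * δ₁ / b)))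
    (A B C : EuclideanSpace ℝ (Fin 2))
    (hncol : ¬ Collinear ℝ ({A, B, C} : Set (EuclideanSpace ℝ (Fin 2))))
    (hA : dist A O = R) (hB : dist B O = R) (hC : dist C O = R)
    (tAB : IsTangent (lineThrough A B) (ellipse a b))
    (tBC : IsTangent (lineThrough B C) (ellipse a b))
    (tCA : IsTangent (lineThrough C A) (ellipse a b))
    (G : EuclideanSpace ℝ (Fin 2)) (hG : G = (3 : ℝ)⁻¹ • (A + B + C)) :
    dist G (pt 0 (-(Real.sqrt (4 * a ^ 4 - 5 * a ^ 2 * b ^ 2 + b ^ 4) / (3 * b)))) =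
      2 * (a ^ 2 - b ^ 2) / (3 * b) := by
  have ha : 0 < a := lt_trans hb hab
  have hbne : b ≠ 0 := ne_of_gt hb
  have hane : a ≠ 0 := ne_of_gt ha
  have hab2 : 0 < a^2 - b^2 := by nlinarith
  have h4ab : 0 < 4*a^2 - b^2 := by nlinarith
  have hRpos : 0 < R := by rw [hR]; positivity
  have hRne : R ≠ 0 := ne_of_gt hRpos
  have hbR : b * R = 2*a^2 := by rw [hR]; field_simp
  set d : ℝ := c * δ₁ / b with hddef
  have hc0 : 0 ≤ c := hc ▸ Real.sqrt_nonneg _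
  have hδ0 : 0 ≤ δ₁ := hδ ▸ Real.sqrt_nonneg _
  have hc2 : c^2 = a^2 - b^2 := by rw [hc]; exact Real.sq_sqrt hab2.le
  have hδ2 : δ₁^2 = 4*a^2 - b^2 := by rw [hδ]; exact Real.sq_sqrt h4ab.le
  have hd2 : b^2*d^2 = (a^2-b^2)*(4*a^2-b^2) := by
    have h1 : b^2*d^2 = c^2*δ₁^2 := by rw [hddef]; field_simp
    rw [h1, hc2, hδ2]
  have hd0 : 0 ≤ d := by rw [hddef]; exact div_nonneg (mul_nonneg hc0 hδ0) hb.le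
  have hbd : b*d = Real.sqrt (4*a^4 - 5*a^2*b^2 + b^4) := by
    have h1 : b*d = c*δ₁ := by rw [hddef]; field_simp
    rw [h1, hc, hδ, ← Real.sqrt_mul hab2.le]
    congr 1; ring
  have hO0 : O 0 = 0 := by rw [hO]; rfl
  have hO1 : O 1 = -d := by rw [hO]; rfl
  have sqsum : ∀ X : EuclideanSpace ℝ (Fin 2), dist X O = R → (X 0)^2 + (X 1 + d)^2 = R^2 := by
    intro X hX
    have h1 : Real.sqrt ((X 0 - O 0)^2 + (X 1 - O 1)^2) = R := by
      rw [← hX, EuclideanSpace.dist_eq, Fin.sum_univ_two, Real.dist_eq, Real.dist_eq, sq_abs, sq_abs]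
    have h2 : (X 0 - O 0)^2 + (X 1 - O 1)^2 = R^2 := by
      rw [← h1, Real.sq_sqrt (by positivity)]
    rw [hO0, hO1] at h2
    linear_combination h2
  have hAB : A ≠ B := fun h => hncol (by rw [h, Set.insert_idem]; exact collinear_pair ℝ B C)
  have hBC : B ≠ C := fun h => hncol (by rw [h, Set.pair_eq_singleton]; exact collinear_pair ℝ A C)
  have hCA : C ≠ A := fun h => hncol (by
    rw [h, Set.insert_comm, Set.pair_eq_singleton]; exact collinear_pair ℝ B A)
  have tab := tangent_poly hane hbne hAB tAB
  have tbc := tangent_poly hane hbne hBC tBC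
  have tca := tangent_poly hane hbne hCA tCA
  obtain ⟨c1, s1, hx1, hy1⟩ : ∃ u v : ℝ, A 0 = R*u ∧ A 1 = R*v - d :=
    ⟨A 0/R, (A 1 + d)/R, by field_simp, by field_simp; ring⟩
  obtain ⟨c2, s2, hx2, hy2⟩ : ∃ u v : ℝ, B 0 = R*u ∧ B 1 = R*v - d :=
    ⟨B 0/R, (B 1 + d)/R, by field_simp, by field_simp; ring⟩
  obtain ⟨c3, s3, hx3, hy3⟩ : ∃ u v : ℝ, C 0 = R*u ∧ C 1 = R*v - d :=
    ⟨C 0/R, (C 1 + d)/R, by field_simp, by field_simp; ring⟩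
  have u1 : c1^2 + s1^2 = 1 := by
    have h := sqsum A hA; rw [hx1, hy1] at h
    exact mul_left_cancel₀ (pow_ne_zero 2 hRne) (by linear_combination h : R^2*(c1^2+s1^2) = R^2*1)
  have u2 : c2^2 + s2^2 = 1 := by
    have h := sqsum B hB; rw [hx2, hy2] at h
    exact mul_left_cancel₀ (pow_ne_zero 2 hRne) (by linear_combination h : R^2*(c2^2+s2^2) = R^2*1)
  have u3 : c3^2 + s3^2 = 1 := by
    have h := sqsum C hC; rw [hx3, hy3] at h
    exact mul_left_cancel₀ (pow_ne_zero 2 hRne) (by linear_combination h : R^2*(c3^2+s3^2) = R^2*1)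
  rw [hx1, hy1, hx2, hy2] at tab
  rw [hx2, hy2, hx3, hy3] at tbc
  rw [hx3, hy3, hx1, hy1] at tca
  have hnefac : ∀ x1 y1 x2 y2 : ℝ, x1^2+y1^2 = 1 → x2^2+y2^2 = 1 →
      (R*x1 ≠ R*x2 ∨ R*y1 - d ≠ R*y2 - d) → R^2*(1 - x1*x2 - y1*y2) ≠ 0 := by
    intro x1 y1 x2 y2 hu1 hu2 hne h0
    have hval : (R*x1 - R*x2)^2 + ((R*y1 - d) - (R*y2 - d))^2 = 2*(R^2*(1 - x1*x2 - y1*y2)) := by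
      linear_combination R^2*hu1 + R^2*hu2
    rw [h0, mul_zero] at hval
    obtain ⟨h1, h2⟩ := (add_eq_zero_iff_of_nonneg (sq_nonneg _) (sq_nonneg _)).mp hval
    rcases hne with h | h
    · exact h (sub_eq_zero.mp (sq_eq_zero_iff.mp h1))
    · exact h (sub_eq_zero.mp (sq_eq_zero_iff.mp h2))
  have hcoordne : ∀ (X Y : EuclideanSpace ℝ (Fin 2)), X ≠ Y → (X 0 ≠ Y 0 ∨ X 1 ≠ Y 1) := by
    intro X Y h
    by_contra hcon
    push_neg at hcon
    exact h (PiLp.ext fun j => by fin_cases j <;> simp [hcon.1, hcon.2])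
  have hne12 : R^2*(1 - c1*c2 - s1*s2) ≠ 0 := by
    apply hnefac _ _ _ _ u1 u2
    rcases hcoordne A B hAB with h | h
    · left; rw [← hx1, ← hx2]; exact h
    · right; rw [← hy1, ← hy2]; exact h
  have hne23 : R^2*(1 - c2*c3 - s2*s3) ≠ 0 := by
    apply hnefac _ _ _ _ u2 u3
    rcases hcoordne B C hBC with h | h
    · left; rw [← hx2, ← hx3]; exact h
    · right; rw [← hy2, ← hy3]; exact h
  have hne31 : R^2*(1 - c3*c1 - s3*s1) ≠ 0 := by
    apply hnefac _ _ _ _ u3 u1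
    rcases hcoordne C A hCA with h | h
    · left; rw [← hx3, ← hx1]; exact h
    · right; rw [← hy3, ← hy1]; exact h
  have hU12 : (a^2 - b^2 + d^2 - R^2)*(c1*c2) + (b^2 - d^2 - a^2 - R^2)*(s1*s2) + 2*R*d*(s1+s2) + (a^2 + b^2 - d^2 - R^2) = 0 := by
    have hfac : R^2*(1 - c1*c2 - s1*s2) * ((a^2 - b^2 + d^2 - R^2)*(c1*c2) + (b^2 - d^2 - a^2 - R^2)*(s1*s2) + 2*R*d*(s1+s2) + (a^2 + b^2 - d^2 - R^2)) = 0 := by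
      linear_combination tab - (R^2*a^2*c2^2 + R^2*b^2 + (-1)*R^2*b^2*c2^2 + R^2*c2^2*d^2 + (-1)*R^2*d^2 + 2*R^3*d*s2 + (-1)*R^4*c2^2 + (-1)*R^4*s2^2)*u1 - (R^2*a^2 + (-1)*R^2*a^2*s1^2 + R^2*b^2*s1^2 + (-1)*R^2*d^2*s1^2 + 2*R^3*d*s1 + (-1)*R^4)*u2
    rcases mul_eq_zero.mp hfac with h | h
    · exact absurd h (hne12)
    · exact h
  have hU12c : ((a:ℂ)^2 - (b:ℂ)^2 + (d:ℂ)^2 - (R:ℂ)^2)*((c1:ℂ)*(c2:ℂ)) + ((b:ℂ)^2 - (d:ℂ)^2 - (a:ℂ)^2 - (R:ℂ)^2)*((s1:ℂ)*(s2:ℂ)) + 2*(R:ℂ)*(d:ℂ)*((s1:ℂ)+(s2:ℂ)) + ((a:ℂ)^2 + (b:ℂ)^2 - (d:ℂ)^2 - (R:ℂ)^2) = 0 := by exact_mod_cast hU12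
  have hU23 : (a^2 - b^2 + d^2 - R^2)*(c2*c3) + (b^2 - d^2 - a^2 - R^2)*(s2*s3) + 2*R*d*(s2+s3) + (a^2 + b^2 - d^2 - R^2) = 0 := by
    have hfac : R^2*(1 - c2*c3 - s2*s3) * ((a^2 - b^2 + d^2 - R^2)*(c2*c3) + (b^2 - d^2 - a^2 - R^2)*(s2*s3) + 2*R*d*(s2+s3) + (a^2 + b^2 - d^2 - R^2)) = 0 := by
      linear_combination tbc - (R^2*a^2*c3^2 + R^2*b^2 + (-1)*R^2*b^2*c3^2 + R^2*c3^2*d^2 + (-1)*R^2*d^2 + 2*R^3*d*s3 + (-1)*R^4*c3^2 + (-1)*R^4*s3^2)*u2 - (R^2*a^2 + (-1)*R^2*a^2*s2^2 + R^2*b^2*s2^2 + (-1)*R^2*d^2*s2^2 + 2*R^3*d*s2 + (-1)*R^4)*u3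
    rcases mul_eq_zero.mp hfac with h | h
    · exact absurd h (hne23)
    · exact h
  have hU23c : ((a:ℂ)^2 - (b:ℂ)^2 + (d:ℂ)^2 - (R:ℂ)^2)*((c2:ℂ)*(c3:ℂ)) + ((b:ℂ)^2 - (d:ℂ)^2 - (a:ℂ)^2 - (R:ℂ)^2)*((s2:ℂ)*(s3:ℂ)) + 2*(R:ℂ)*(d:ℂ)*((s2:ℂ)+(s3:ℂ)) + ((a:ℂ)^2 + (b:ℂ)^2 - (d:ℂ)^2 - (R:ℂ)^2) = 0 := by exact_mod_cast hU23
  have hU31 : (a^2 - b^2 + d^2 - R^2)*(c3*c1) + (b^2 - d^2 - a^2 - R^2)*(s3*s1) + 2*R*d*(s3+s1) + (a^2 + b^2 - d^2 - R^2) = 0 := by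
    have hfac : R^2*(1 - c3*c1 - s3*s1) * ((a^2 - b^2 + d^2 - R^2)*(c3*c1) + (b^2 - d^2 - a^2 - R^2)*(s3*s1) + 2*R*d*(s3+s1) + (a^2 + b^2 - d^2 - R^2)) = 0 := by
      linear_combination tca - (R^2*a^2*c1^2 + R^2*b^2 + (-1)*R^2*b^2*c1^2 + R^2*c1^2*d^2 + (-1)*R^2*d^2 + 2*R^3*d*s1 + (-1)*R^4*c1^2 + (-1)*R^4*s1^2)*u3 - (R^2*a^2 + (-1)*R^2*a^2*s3^2 + R^2*b^2*s3^2 + (-1)*R^2*d^2*s3^2 + 2*R^3*d*s3 + (-1)*R^4)*u1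
    rcases mul_eq_zero.mp hfac with h | h
    · exact absurd h (hne31)
    · exact h
  have hU31c : ((a:ℂ)^2 - (b:ℂ)^2 + (d:ℂ)^2 - (R:ℂ)^2)*((c3:ℂ)*(c1:ℂ)) + ((b:ℂ)^2 - (d:ℂ)^2 - (a:ℂ)^2 - (R:ℂ)^2)*((s3:ℂ)*(s1:ℂ)) + 2*(R:ℂ)*(d:ℂ)*((s3:ℂ)+(s1:ℂ)) + ((a:ℂ)^2 + (b:ℂ)^2 - (d:ℂ)^2 - (R:ℂ)^2) = 0 := by exact_mod_cast hU31
  have u1c : (c1:ℂ)^2 + (s1:ℂ)^2 = 1 := by exact_mod_cast u1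
  have u2c : (c2:ℂ)^2 + (s2:ℂ)^2 = 1 := by exact_mod_cast u2
  have u3c : (c3:ℂ)^2 + (s3:ℂ)^2 = 1 := by exact_mod_cast u3
  set z1 : ℂ := (c1:ℂ) + (s1:ℂ)*Complex.I with hz1
  set z2 : ℂ := (c2:ℂ) + (s2:ℂ)*Complex.I with hz2
  set z3 : ℂ := (c3:ℂ) + (s3:ℂ)*Complex.I with hz3
  have hre_im : ∀ x y u v : ℝ, ((x:ℂ) + (y:ℂ)*Complex.I = (u:ℂ) + (v:ℂ)*Complex.I) → x = u ∧ y = v := by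
    intro x y u v h
    have h1 := congrArg Complex.re h
    have h2 := congrArg Complex.im h
    simp at h1 h2
    exact ⟨h1, h2⟩
  have hz12 : z1 ≠ z2 := by
    intro h
    rw [hz1, hz2] at h
    obtain ⟨h1, h2⟩ := hre_im _ _ _ _ h
    exact hAB (PiLp.ext fun j => by fin_cases j <;> simp [hx1, hy1, hx2, hy2, h1, h2])
  have hz23 : z2 ≠ z3 := by
    intro h
    rw [hz2, hz3] at h
    obtain ⟨h1, h2⟩ := hre_im _ _ _ _ h
    exact hBC (PiLp.ext fun j => by fin_cases j <;> simp [hx2, hy2, hx3, hy3, h1, h2])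
  have hz13 : z1 ≠ z3 := by
    intro h
    rw [hz1, hz3] at h
    obtain ⟨h1, h2⟩ := hre_im _ _ _ _ h
    exact hCA.symm (PiLp.ext fun j => by fin_cases j <;> simp [hx1, hy1, hx3, hy3, h1, h2])
  have hTz12 : ((a:ℂ)^2 - (b:ℂ)^2 + (d:ℂ)^2 - (R:ℂ)^2)*(z1^2+1)*(z2^2+1) + ((a:ℂ)^2 - (b:ℂ)^2 + (d:ℂ)^2 + (R:ℂ)^2)*(z1^2-1)*(z2^2-1) - 4*(R:ℂ)*(d:ℂ)*Complex.I*((z1^2-1)*z2+(z2^2-1)*z1) + 4*((a:ℂ)^2 + (b:ℂ)^2 - (d:ℂ)^2 - (R:ℂ)^2)*(z1*z2) = 0 := by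
    rw [hz1, hz2]
    linear_combination (4*((c1:ℂ)+(s1:ℂ)*Complex.I)*((c2:ℂ)+(s2:ℂ)*Complex.I))*hU12c + ((-8)*(R:ℂ)*(c1:ℂ)*(c2:ℂ)*(d:ℂ)*(s1:ℂ) + (-8)*(R:ℂ)*(c1:ℂ)*(c2:ℂ)*(d:ℂ)*(s2:ℂ) + (-8)*(R:ℂ)*(c1:ℂ)*(d:ℂ)*Complex.I*(s1:ℂ)*(s2:ℂ) + (-4)*(R:ℂ)*(c1:ℂ)*(d:ℂ)*Complex.I*(s2:ℂ)^2 + (-4)*(R:ℂ)*(c1:ℂ)^2*(d:ℂ)*(s2:ℂ) + (-8)*(R:ℂ)*(c2:ℂ)*(d:ℂ)*Complex.I*(s1:ℂ)*(s2:ℂ) + (-4)*(R:ℂ)*(c2:ℂ)*(d:ℂ)*Complex.I*(s1:ℂ)^2 + (-4)*(R:ℂ)*(c2:ℂ)^2*(d:ℂ)*(s1:ℂ) + (-4)*(R:ℂ)*(d:ℂ)*Complex.I^2*(s1:ℂ)*(s2:ℂ)^2 + (-4)*(R:ℂ)*(d:ℂ)*Complex.I^2*(s1:ℂ)^2*(s2:ℂ)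 + 4*(R:ℂ)*(d:ℂ)*(s1:ℂ) + (-4)*(R:ℂ)*(d:ℂ)*(s1:ℂ)*(s2:ℂ)^2 + (-4)*(R:ℂ)*(d:ℂ)*(s1:ℂ)^2*(s2:ℂ) + 4*(R:ℂ)*(d:ℂ)*(s2:ℂ) + 4*(R:ℂ)^2*(c1:ℂ)*(c2:ℂ)*(s1:ℂ)*(s2:ℂ) + (-2)*(R:ℂ)^2*(s1:ℂ)^2 + 4*(R:ℂ)^2*(s1:ℂ)^2*(s2:ℂ)^2 + (-2)*(R:ℂ)^2*(s2:ℂ)^2 + 4*(a:ℂ)^2*(c1:ℂ)*(c2:ℂ)*(s1:ℂ)*(s2:ℂ) + 4*(a:ℂ)^2*(c1:ℂ)*Complex.I*(s1:ℂ)*(s2:ℂ)^2 + 2*(a:ℂ)^2*(c1:ℂ)^2*(s2:ℂ)^2 + 4*(a:ℂ)^2*(c2:ℂ)*Complex.I*(s1:ℂ)^2*(s2:ℂ) + 2*(a:ℂ)^2*(c2:ℂ)^2*(s1:ℂ)^2 + 2*(a:ℂ)^2*Complex.I^2*(s1:ℂ)^2*(s2:ℂ)^2 + 2*(a:ℂ)^2*(s1:ℂ)^2*(s2:ℂ)^2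 + (-4)*(b:ℂ)^2*(c1:ℂ)*(c2:ℂ)*(s1:ℂ)*(s2:ℂ) + (-4)*(b:ℂ)^2*(c1:ℂ)*Complex.I*(s1:ℂ)*(s2:ℂ)^2 + (-2)*(b:ℂ)^2*(c1:ℂ)^2*(s2:ℂ)^2 + (-4)*(b:ℂ)^2*(c2:ℂ)*Complex.I*(s1:ℂ)^2*(s2:ℂ) + (-2)*(b:ℂ)^2*(c2:ℂ)^2*(s1:ℂ)^2 + (-2)*(b:ℂ)^2*Complex.I^2*(s1:ℂ)^2*(s2:ℂ)^2 + (-2)*(b:ℂ)^2*(s1:ℂ)^2*(s2:ℂ)^2 + 4*(c1:ℂ)*(c2:ℂ)*(d:ℂ)^2*(s1:ℂ)*(s2:ℂ) + 4*(c1:ℂ)*(d:ℂ)^2*Complex.I*(s1:ℂ)*(s2:ℂ)^2 + 2*(c1:ℂ)^2*(d:ℂ)^2*(s2:ℂ)^2 + 4*(c2:ℂ)*(d:ℂ)^2*Complex.I*(s1:ℂ)^2*(s2:ℂ) + 2*(c2:ℂ)^2*(d:ℂ)^2*(s1:ℂ)^2 + 2*(d:ℂ)^2*Complex.I^2*(s1:ℂ)^2*(s2:ℂ)^2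 + 2*(d:ℂ)^2*(s1:ℂ)^2*(s2:ℂ)^2)*Complex.I_sq + ((-4)*(R:ℂ)*(c2:ℂ)*(d:ℂ)*Complex.I + 4*(R:ℂ)*(d:ℂ)*(s2:ℂ) + (-2)*(R:ℂ)^2 + 4*(R:ℂ)^2*(c2:ℂ)*Complex.I*(s2:ℂ) + 4*(R:ℂ)^2*(c2:ℂ)^2 + (-2)*(a:ℂ)^2*(c2:ℂ)^2 + (-2)*(a:ℂ)^2*(s2:ℂ)^2 + 2*(b:ℂ)^2*(c2:ℂ)^2 + 2*(b:ℂ)^2*(s2:ℂ)^2 + (-2)*(c2:ℂ)^2*(d:ℂ)^2 + (-2)*(d:ℂ)^2*(s2:ℂ)^2)*u1c + ((-4)*(R:ℂ)*(c1:ℂ)*(d:ℂ)*Complex.I + 4*(R:ℂ)*(d:ℂ)*(s1:ℂ) + 2*(R:ℂ)^2 + 4*(R:ℂ)^2*(c1:ℂ)*Complex.I*(s1:ℂ) + (-4)*(R:ℂ)^2*(s1:ℂ)^2 + (-2)*(a:ℂ)^2 + 2*(b:ℂ)^2 + (-2)*(d:ℂ)^2)*u2c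
  have hTz23 : ((a:ℂ)^2 - (b:ℂ)^2 + (d:ℂ)^2 - (R:ℂ)^2)*(z2^2+1)*(z3^2+1) + ((a:ℂ)^2 - (b:ℂ)^2 + (d:ℂ)^2 + (R:ℂ)^2)*(z2^2-1)*(z3^2-1) - 4*(R:ℂ)*(d:ℂ)*Complex.I*((z2^2-1)*z3+(z3^2-1)*z2) + 4*((a:ℂ)^2 + (b:ℂ)^2 - (d:ℂ)^2 - (R:ℂ)^2)*(z2*z3) = 0 := by
    rw [hz2, hz3]
    linear_combination (4*((c2:ℂ)+(s2:ℂ)*Complex.I)*((c3:ℂ)+(s3:ℂ)*Complex.I))*hU23c + ((-8)*(R:ℂ)*(c2:ℂ)*(c3:ℂ)*(d:ℂ)*(s2:ℂ) + (-8)*(R:ℂ)*(c2:ℂ)*(c3:ℂ)*(d:ℂ)*(s3:ℂ) + (-8)*(R:ℂ)*(c2:ℂ)*(d:ℂ)*Complex.I*(s2:ℂ)*(s3:ℂ) + (-4)*(R:ℂ)*(c2:ℂ)*(d:ℂ)*Complex.I*(s3:ℂ)^2 + (-4)*(R:ℂ)*(c2:ℂ)^2*(d:ℂ)*(s3:ℂ)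 + (-8)*(R:ℂ)*(c3:ℂ)*(d:ℂ)*Complex.I*(s2:ℂ)*(s3:ℂ) + (-4)*(R:ℂ)*(c3:ℂ)*(d:ℂ)*Complex.I*(s2:ℂ)^2 + (-4)*(R:ℂ)*(c3:ℂ)^2*(d:ℂ)*(s2:ℂ) + (-4)*(R:ℂ)*(d:ℂ)*Complex.I^2*(s2:ℂ)*(s3:ℂ)^2 + (-4)*(R:ℂ)*(d:ℂ)*Complex.I^2*(s2:ℂ)^2*(s3:ℂ) + 4*(R:ℂ)*(d:ℂ)*(s2:ℂ) + (-4)*(R:ℂ)*(d:ℂ)*(s2:ℂ)*(s3:ℂ)^2 + (-4)*(R:ℂ)*(d:ℂ)*(s2:ℂ)^2*(s3:ℂ) + 4*(R:ℂ)*(d:ℂ)*(s3:ℂ) + 4*(R:ℂ)^2*(c2:ℂ)*(c3:ℂ)*(s2:ℂ)*(s3:ℂ) + (-2)*(R:ℂ)^2*(s2:ℂ)^2 + 4*(R:ℂ)^2*(s2:ℂ)^2*(s3:ℂ)^2 + (-2)*(R:ℂ)^2*(s3:ℂ)^2 + 4*(a:ℂ)^2*(c2:ℂ)*(c3:ℂ)*(s2:ℂ)*(s3:ℂ)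 + 4*(a:ℂ)^2*(c2:ℂ)*Complex.I*(s2:ℂ)*(s3:ℂ)^2 + 2*(a:ℂ)^2*(c2:ℂ)^2*(s3:ℂ)^2 + 4*(a:ℂ)^2*(c3:ℂ)*Complex.I*(s2:ℂ)^2*(s3:ℂ) + 2*(a:ℂ)^2*(c3:ℂ)^2*(s2:ℂ)^2 + 2*(a:ℂ)^2*Complex.I^2*(s2:ℂ)^2*(s3:ℂ)^2 + 2*(a:ℂ)^2*(s2:ℂ)^2*(s3:ℂ)^2 + (-4)*(b:ℂ)^2*(c2:ℂ)*(c3:ℂ)*(s2:ℂ)*(s3:ℂ) + (-4)*(b:ℂ)^2*(c2:ℂ)*Complex.I*(s2:ℂ)*(s3:ℂ)^2 + (-2)*(b:ℂ)^2*(c2:ℂ)^2*(s3:ℂ)^2 + (-4)*(b:ℂ)^2*(c3:ℂ)*Complex.I*(s2:ℂ)^2*(s3:ℂ) + (-2)*(b:ℂ)^2*(c3:ℂ)^2*(s2:ℂ)^2 + (-2)*(b:ℂ)^2*Complex.I^2*(s2:ℂ)^2*(s3:ℂ)^2 + (-2)*(b:ℂ)^2*(s2:ℂ)^2*(s3:ℂ)^2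 + 4*(c2:ℂ)*(c3:ℂ)*(d:ℂ)^2*(s2:ℂ)*(s3:ℂ) + 4*(c2:ℂ)*(d:ℂ)^2*Complex.I*(s2:ℂ)*(s3:ℂ)^2 + 2*(c2:ℂ)^2*(d:ℂ)^2*(s3:ℂ)^2 + 4*(c3:ℂ)*(d:ℂ)^2*Complex.I*(s2:ℂ)^2*(s3:ℂ) + 2*(c3:ℂ)^2*(d:ℂ)^2*(s2:ℂ)^2 + 2*(d:ℂ)^2*Complex.I^2*(s2:ℂ)^2*(s3:ℂ)^2 + 2*(d:ℂ)^2*(s2:ℂ)^2*(s3:ℂ)^2)*Complex.I_sq + ((-4)*(R:ℂ)*(c3:ℂ)*(d:ℂ)*Complex.I + 4*(R:ℂ)*(d:ℂ)*(s3:ℂ) + (-2)*(R:ℂ)^2 + 4*(R:ℂ)^2*(c3:ℂ)*Complex.I*(s3:ℂ) + 4*(R:ℂ)^2*(c3:ℂ)^2 + (-2)*(a:ℂ)^2*(c3:ℂ)^2 + (-2)*(a:ℂ)^2*(s3:ℂ)^2 + 2*(b:ℂ)^2*(c3:ℂ)^2 + 2*(b:ℂ)^2*(s3:ℂ)^2 +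 (-2)*(c3:ℂ)^2*(d:ℂ)^2 + (-2)*(d:ℂ)^2*(s3:ℂ)^2)*u2c + ((-4)*(R:ℂ)*(c2:ℂ)*(d:ℂ)*Complex.I + 4*(R:ℂ)*(d:ℂ)*(s2:ℂ) + 2*(R:ℂ)^2 + 4*(R:ℂ)^2*(c2:ℂ)*Complex.I*(s2:ℂ) + (-4)*(R:ℂ)^2*(s2:ℂ)^2 + (-2)*(a:ℂ)^2 + 2*(b:ℂ)^2 + (-2)*(d:ℂ)^2)*u3c
  have hTz31 : ((a:ℂ)^2 - (b:ℂ)^2 + (d:ℂ)^2 - (R:ℂ)^2)*(z3^2+1)*(z1^2+1) + ((a:ℂ)^2 - (b:ℂ)^2 + (d:ℂ)^2 + (R:ℂ)^2)*(z3^2-1)*(z1^2-1) - 4*(R:ℂ)*(d:ℂ)*Complex.I*((z3^2-1)*z1+(z1^2-1)*z3) + 4*((a:ℂ)^2 + (b:ℂ)^2 - (d:ℂ)^2 - (R:ℂ)^2)*(z3*z1) = 0 := by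
    rw [hz3, hz1]
    linear_combination (4*((c3:ℂ)+(s3:ℂ)*Complex.I)*((c1:ℂ)+(s1:ℂ)*Complex.I))*hU31c + ((-8)*(R:ℂ)*(c1:ℂ)*(c3:ℂ)*(d:ℂ)*(s1:ℂ) + (-8)*(R:ℂ)*(c1:ℂ)*(c3:ℂ)*(d:ℂ)*(s3:ℂ) + (-8)*(R:ℂ)*(c1:ℂ)*(d:ℂ)*Complex.I*(s1:ℂ)*(s3:ℂ) + (-4)*(R:ℂ)*(c1:ℂ)*(d:ℂ)*Complex.I*(s3:ℂ)^2 + (-4)*(R:ℂ)*(c1:ℂ)^2*(d:ℂ)*(s3:ℂ) + (-8)*(R:ℂ)*(c3:ℂ)*(d:ℂ)*Complex.I*(s1:ℂ)*(s3:ℂ) + (-4)*(R:ℂ)*(c3:ℂ)*(d:ℂ)*Complex.I*(s1:ℂ)^2 + (-4)*(R:ℂ)*(c3:ℂ)^2*(d:ℂ)*(s1:ℂ) + (-4)*(R:ℂ)*(d:ℂ)*Complex.I^2*(s1:ℂ)*(s3:ℂ)^2 + (-4)*(R:ℂ)*(d:ℂ)*Complex.I^2*(s1:ℂ)^2*(s3:ℂ)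 + 4*(R:ℂ)*(d:ℂ)*(s1:ℂ) + (-4)*(R:ℂ)*(d:ℂ)*(s1:ℂ)*(s3:ℂ)^2 + (-4)*(R:ℂ)*(d:ℂ)*(s1:ℂ)^2*(s3:ℂ) + 4*(R:ℂ)*(d:ℂ)*(s3:ℂ) + 4*(R:ℂ)^2*(c1:ℂ)*(c3:ℂ)*(s1:ℂ)*(s3:ℂ) + (-2)*(R:ℂ)^2*(s1:ℂ)^2 + 4*(R:ℂ)^2*(s1:ℂ)^2*(s3:ℂ)^2 + (-2)*(R:ℂ)^2*(s3:ℂ)^2 + 4*(a:ℂ)^2*(c1:ℂ)*(c3:ℂ)*(s1:ℂ)*(s3:ℂ) + 4*(a:ℂ)^2*(c1:ℂ)*Complex.I*(s1:ℂ)*(s3:ℂ)^2 + 2*(a:ℂ)^2*(c1:ℂ)^2*(s3:ℂ)^2 + 4*(a:ℂ)^2*(c3:ℂ)*Complex.I*(s1:ℂ)^2*(s3:ℂ) + 2*(a:ℂ)^2*(c3:ℂ)^2*(s1:ℂ)^2 + 2*(a:ℂ)^2*Complex.I^2*(s1:ℂ)^2*(s3:ℂ)^2 + 2*(a:ℂ)^2*(s1:ℂ)^2*(s3:ℂ)^2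 + (-4)*(b:ℂ)^2*(c1:ℂ)*(c3:ℂ)*(s1:ℂ)*(s3:ℂ) + (-4)*(b:ℂ)^2*(c1:ℂ)*Complex.I*(s1:ℂ)*(s3:ℂ)^2 + (-2)*(b:ℂ)^2*(c1:ℂ)^2*(s3:ℂ)^2 + (-4)*(b:ℂ)^2*(c3:ℂ)*Complex.I*(s1:ℂ)^2*(s3:ℂ) + (-2)*(b:ℂ)^2*(c3:ℂ)^2*(s1:ℂ)^2 + (-2)*(b:ℂ)^2*Complex.I^2*(s1:ℂ)^2*(s3:ℂ)^2 + (-2)*(b:ℂ)^2*(s1:ℂ)^2*(s3:ℂ)^2 + 4*(c1:ℂ)*(c3:ℂ)*(d:ℂ)^2*(s1:ℂ)*(s3:ℂ) + 4*(c1:ℂ)*(d:ℂ)^2*Complex.I*(s1:ℂ)*(s3:ℂ)^2 + 2*(c1:ℂ)^2*(d:ℂ)^2*(s3:ℂ)^2 + 4*(c3:ℂ)*(d:ℂ)^2*Complex.I*(s1:ℂ)^2*(s3:ℂ) + 2*(c3:ℂ)^2*(d:ℂ)^2*(s1:ℂ)^2 + 2*(d:ℂ)^2*Complex.I^2*(s1:ℂ)^2*(s3:ℂ)^2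 + 2*(d:ℂ)^2*(s1:ℂ)^2*(s3:ℂ)^2)*Complex.I_sq + ((-4)*(R:ℂ)*(c1:ℂ)*(d:ℂ)*Complex.I + 4*(R:ℂ)*(d:ℂ)*(s1:ℂ) + (-2)*(R:ℂ)^2 + 4*(R:ℂ)^2*(c1:ℂ)*Complex.I*(s1:ℂ) + 4*(R:ℂ)^2*(c1:ℂ)^2 + (-2)*(a:ℂ)^2*(c1:ℂ)^2 + (-2)*(a:ℂ)^2*(s1:ℂ)^2 + 2*(b:ℂ)^2*(c1:ℂ)^2 + 2*(b:ℂ)^2*(s1:ℂ)^2 + (-2)*(c1:ℂ)^2*(d:ℂ)^2 + (-2)*(d:ℂ)^2*(s1:ℂ)^2)*u3c + ((-4)*(R:ℂ)*(c3:ℂ)*(d:ℂ)*Complex.I + 4*(R:ℂ)*(d:ℂ)*(s3:ℂ) + 2*(R:ℂ)^2 + 4*(R:ℂ)^2*(c3:ℂ)*Complex.I*(s3:ℂ) + (-4)*(R:ℂ)^2*(s3:ℂ)^2 + (-2)*(a:ℂ)^2 + 2*(b:ℂ)^2 + (-2)*(d:ℂ)^2)*u1c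
  have hv1 : (z2 - z3)*(((-(4*(R:ℂ)*(d:ℂ)*Complex.I))*(z1+z2+z3) + 4*((a:ℂ)^2+(b:ℂ)^2-(d:ℂ)^2-(R:ℂ)^2) + 2*(R:ℂ)^2 + (2*((a:ℂ)^2-(b:ℂ)^2+(d:ℂ)^2))*(z1*z2+z2*z3+z3*z1))*z1 + ((-2*(R:ℂ)^2)*(z1+z2+z3) + 4*(R:ℂ)*(d:ℂ)*Complex.I - (2*((a:ℂ)^2-(b:ℂ)^2+(d:ℂ)^2))*(z1*z2*z3))) = 0 := by
    linear_combination hTz12 - hTz31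
  have hv2 : (z1 - z3)*(((-(4*(R:ℂ)*(d:ℂ)*Complex.I))*(z1+z2+z3) + 4*((a:ℂ)^2+(b:ℂ)^2-(d:ℂ)^2-(R:ℂ)^2) + 2*(R:ℂ)^2 + (2*((a:ℂ)^2-(b:ℂ)^2+(d:ℂ)^2))*(z1*z2+z2*z3+z3*z1))*z2 + ((-2*(R:ℂ)^2)*(z1+z2+z3) + 4*(R:ℂ)*(d:ℂ)*Complex.I - (2*((a:ℂ)^2-(b:ℂ)^2+(d:ℂ)^2))*(z1*z2*z3))) = 0 := by
    linear_combination hTz12 - hTz23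
  have hpq1 : ((-(4*(R:ℂ)*(d:ℂ)*Complex.I))*(z1+z2+z3) + 4*((a:ℂ)^2+(b:ℂ)^2-(d:ℂ)^2-(R:ℂ)^2) + 2*(R:ℂ)^2 + (2*((a:ℂ)^2-(b:ℂ)^2+(d:ℂ)^2))*(z1*z2+z2*z3+z3*z1))*z1 + ((-2*(R:ℂ)^2)*(z1+z2+z3) + 4*(R:ℂ)*(d:ℂ)*Complex.I - (2*((a:ℂ)^2-(b:ℂ)^2+(d:ℂ)^2))*(z1*z2*z3)) = 0 :=
    (mul_eq_zero.mp hv1).resolve_left (sub_ne_zero_of_ne hz23)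
  have hpq2 : ((-(4*(R:ℂ)*(d:ℂ)*Complex.I))*(z1+z2+z3) + 4*((a:ℂ)^2+(b:ℂ)^2-(d:ℂ)^2-(R:ℂ)^2) + 2*(R:ℂ)^2 + (2*((a:ℂ)^2-(b:ℂ)^2+(d:ℂ)^2))*(z1*z2+z2*z3+z3*z1))*z2 + ((-2*(R:ℂ)^2)*(z1+z2+z3) + 4*(R:ℂ)*(d:ℂ)*Complex.I - (2*((a:ℂ)^2-(b:ℂ)^2+(d:ℂ)^2))*(z1*z2*z3)) = 0 :=
    (mul_eq_zero.mp hv2).resolve_left (sub_ne_zero_of_ne hz13)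
  have hP0 : ((-(4*(R:ℂ)*(d:ℂ)*Complex.I))*(z1+z2+z3) + 4*((a:ℂ)^2+(b:ℂ)^2-(d:ℂ)^2-(R:ℂ)^2) + 2*(R:ℂ)^2 + (2*((a:ℂ)^2-(b:ℂ)^2+(d:ℂ)^2))*(z1*z2+z2*z3+z3*z1))*(z1 - z2) = 0 := by linear_combination hpq1 - hpq2
  have hPz : ((-(4*(R:ℂ)*(d:ℂ)*Complex.I))*(z1+z2+z3) + 4*((a:ℂ)^2+(b:ℂ)^2-(d:ℂ)^2-(R:ℂ)^2) + 2*(R:ℂ)^2 + (2*((a:ℂ)^2-(b:ℂ)^2+(d:ℂ)^2))*(z1*z2+z2*z3+z3*z1)) = (0:ℂ) :=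
    (mul_eq_zero.mp hP0).resolve_right (sub_ne_zero_of_ne hz12)
  have hQ0 : ((-2*(R:ℂ)^2)*(z1+z2+z3) + 4*(R:ℂ)*(d:ℂ)*Complex.I - (2*((a:ℂ)^2-(b:ℂ)^2+(d:ℂ)^2))*(z1*z2*z3)) = (0:ℂ) := by linear_combination hpq1 - z1*hPz
  have hE3eq : (2*((a:ℂ)^2-(b:ℂ)^2+(d:ℂ)^2))*(z1*z2*z3) = ((-2*R^2*(c1+c2+c3):ℝ):ℂ) + ((-2*R^2*(s1+s2+s3) + 4*R*d:ℝ):ℂ)*Complex.I := by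
    have hrhs : (-2*(R:ℂ)^2)*(z1+z2+z3) + 4*(R:ℂ)*(d:ℂ)*Complex.I = ((-2*R^2*(c1+c2+c3):ℝ):ℂ) + ((-2*R^2*(s1+s2+s3) + 4*R*d:ℝ):ℂ)*Complex.I := by
      rw [hz1, hz2, hz3]; push_cast; ring
    rw [← hrhs]
    linear_combination -hQ0
  have hprodc : (2*((a:ℂ)^2-(b:ℂ)^2+(d:ℂ)^2))*(z1*z2*z3) = ((2*(a^2-b^2+d^2)*(c1*c2*c3 - c1*s2*s3 - s1*c2*s3 - s1*s2*c3):ℝ):ℂ) + ((2*(a^2-b^2+d^2)*(s1*c2*c3 + c1*s2*c3 + c1*c2*s3 - s1*s2*s3):ℝ):ℂ)*Complex.I := by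
    rw [hz1, hz2, hz3]; push_cast
    linear_combination (2*((a:ℂ)^2-(b:ℂ)^2+(d:ℂ)^2))*((c1:ℂ)*(s2:ℂ)*(s3:ℂ) + (c2:ℂ)*(s1:ℂ)*(s3:ℂ) + (c3:ℂ)*(s1:ℂ)*(s2:ℂ) + Complex.I*(s1:ℂ)*(s2:ℂ)*(s3:ℂ))*Complex.I_sq
  obtain ⟨hreal, himag⟩ := hre_im _ _ _ _ (hprodc.symm.trans hE3eq)
  have hBF : (c1*c2*c3 - c1*s2*s3 - s1*c2*s3 - s1*s2*c3)^2 + (s1*c2*c3 + c1*s2*c3 + c1*c2*s3 - s1*s2*s3)^2 = 1 := by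
    linear_combination ((c2^2+s2^2)*(c3^2+s3^2))*u1 + (c3^2+s3^2)*u2 + u3
  have h1sq : (2*(a^2-b^2+d^2)*(c1*c2*c3 - c1*s2*s3 - s1*c2*s3 - s1*s2*c3))^2 = (2*R^2*(c1+c2+c3))^2 := by
    linear_combination (2*(a^2-b^2+d^2)*(c1*c2*c3 - c1*s2*s3 - s1*c2*s3 - s1*s2*c3) - 2*R^2*(c1+c2+c3))*hreal
  have h2sq : (2*(a^2-b^2+d^2)*(s1*c2*c3 + c1*s2*c3 + c1*c2*s3 - s1*s2*s3))^2 = (2*R^2*(s1+s2+s3) - 4*R*d)^2 := by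
    linear_combination (2*(a^2-b^2+d^2)*(s1*c2*c3 + c1*s2*c3 + c1*c2*s3 - s1*s2*s3) - (2*R^2*(s1+s2+s3) - 4*R*d))*himag
  have hkey : (2*R^2*(c1+c2+c3))^2 + (2*R^2*(s1+s2+s3) - 4*R*d)^2 = 4*(a^2-b^2+d^2)^2 := by
    linear_combination -h1sq - h2sq + (4*(a^2-b^2+d^2)^2)*hBF
  have hsum : b^2*(a^2-b^2+d^2) = 4*a^2*(a^2-b^2) := by linear_combination hd2
  have h16 : 16*a^4*(b^2*((R*(c1+c2+c3))^2 + (R*(s1+s2+s3)-2*d)^2) - 4*(a^2-b^2)^2) = 0 := by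
    linear_combination (b^4)*hkey + (4*(b^2*(a^2-b^2+d^2) + 4*a^2*(a^2-b^2)))*hsum + (-(4*b^2*((R*(c1+c2+c3))^2 + (R*(s1+s2+s3)-2*d)^2)*(b*R+2*a^2)))*hbR
  have hfinal : b^2*((R*(c1+c2+c3))^2 + (R*(s1+s2+s3)-2*d)^2) = 4*(a^2-b^2)^2 := by
    rcases mul_eq_zero.mp h16 with h | h
    · exact absurd h (by positivity : (0:ℝ) < 16*a^4).ne'
    · exact sub_eq_zero.mp h
  have hG0 : G 0 = (R*c1 + R*c2 + R*c3)/3 := by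
    rw [hG]
    simp only [PiLp.smul_apply, PiLp.add_apply, smul_eq_mul]
    rw [hx1, hx2, hx3]; ring
  have hG1 : G 1 = ((R*s1 - d) + (R*s2 - d) + (R*s3 - d))/3 := by
    rw [hG]
    simp only [PiLp.smul_apply, PiLp.add_apply, smul_eq_mul]
    rw [hy1, hy2, hy3]; ring
  have hbd3 : b*d/(3*b) = d/3 := by
    rw [mul_comm (3:ℝ) b]
    exact mul_div_mul_left d 3 hbne
  have hS : (G 0 - 0)^2 + (G 1 + b*d/(3*b))^2 = (2*(a^2-b^2)/(3*b))^2 := by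
    rw [hG0, hG1, hbd3, div_pow, eq_div_iff (by positivity : ((3:ℝ)*b)^2 ≠ 0)]
    linear_combination hfinal
  have hTpos : 0 ≤ 2*(a^2-b^2)/(3*b) :=
    div_nonneg (mul_nonneg (by norm_num) hab2.le) (by positivity)
  rw [EuclideanSpace.dist_eq, Fin.sum_univ_two, Real.dist_eq, Real.dist_eq, sq_abs, sq_abs]
  have hpt0 : (pt 0 (-(Real.sqrt (4*a^4 - 5*a^2*b^2 + b^4)/(3*b)))) 0 = 0 := rfl
  have hpt1 : (pt 0 (-(Real.sqrt (4*a^4 - 5*a^2*b^2 + b^4)/(3*b)))) 1 = -(Real.sqrt (4*a^4 - 5*a^2*b^2 + b^4)/(3*b)) := rfl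
  rw [show (4:ℝ)*a^4 - 5*a^2*b^2 + b^4 = 4 * a ^ 4 - 5 * a ^ 2 * b ^ 2 + b ^ 4 by ring] at hpt0 hpt1
  rw [hpt0, hpt1, ← hbd]
  rw [show G 1 - -(b*d/(3*b)) = G 1 + b*d/(3*b) by ring]
  rw [hS, Real.sqrt_sq hTpos]
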